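/- Let n ≥ 1, let q be a real number with 1 ≤ q < ∞, and let i ∈ {1,…,n}. If u : ℝ^n → ℝ is continuously differentiable, u belongs to L^q(ℝ^n), and the partial derivative ∂u/∂x_i is integrable on ℝ^n, then ∫_{ℝ^n} (∂u/∂x_i)(x) dx = 0. -/

import Mathlib

open MeasureTheory

section Aux
open Filter Set intervalIntegral


lemma lint_top_of_ge (q : ℝ) (hq : 0 < q) (g : ℝ → ℝ) (A c : ℝ) (hc : 0 < c)
    (h : ∀ t ∈ Ioi A, c ≤ |g t|) :
    (∫⁻ t in Ioi A, (‖g t‖₊ : ENNReal) ^ q) = ⊤ := by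
  have hge : ∀ t ∈ Ioi A, (ENNReal.ofReal c) ^ q ≤ (‖g t‖₊ : ENNReal) ^ q := by
    intro t ht
    refine ENNReal.rpow_le_rpow ?_ hq.le
    rw [← enorm_eq_nnnorm, ← ofReal_norm, Real.norm_eq_abs]
    exact ENNReal.ofReal_le_ofReal (h t ht)
  have h2 := setLIntegral_mono' (μ := volume) measurableSet_Ioi hge
  rw [setLIntegral_const, Real.volume_Ioi, ENNReal.mul_top (by
    simp [ENNReal.rpow_eq_zero_iff, hc, hc.ne', hq, hq.ne'])] at h2
  exact top_le_iff.mp h2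

lemma tendsto_zero_atTop_aux (q : ℝ) (hq : 0 < q) (g : ℝ → ℝ) (L : ℝ)
    (h2 : Tendsto g atTop (nhds L))
    (hLq : ∫⁻ t, (‖g t‖₊ : ENNReal) ^ q < ⊤) : L = 0 := by
  by_contra h
  have habs : Tendsto (fun t => |g t|) atTop (nhds |L|) := h2.abs
  have hev : ∀ᶠ t in atTop, |L| / 2 ≤ |g t| :=
    habs.eventually (eventually_ge_nhds (by simpa using abs_pos.mpr h))
  obtain ⟨A, hA⟩ := eventually_atTop.mp hev
  have htop : (∫⁻ t in Ioi A, (‖g t‖₊ : ENNReal) ^ q) = ⊤ :=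
    lint_top_of_ge q hq g A (|L| / 2) (by simpa using abs_pos.mpr h)
      (fun t ht => hA t (le_of_lt ht))
  have hle : (∫⁻ t in Ioi A, (‖g t‖₊ : ENNReal) ^ q) ≤ ∫⁻ t, (‖g t‖₊ : ENNReal) ^ q :=
    setLIntegral_le_lintegral _ _
  rw [htop] at hle
  exact absurd (top_le_iff.mp hle) (by simpa using hLq.ne)


lemma tendsto_atTop_zero (q : ℝ) (hq : 0 < q) (g g' : ℝ → ℝ)
    (hd : ∀ t, HasDerivAt g (g' t) t)
    (hint : Integrable g' volume)
    (hLq : ∫⁻ t, (‖g t‖₊ : ENNReal) ^ q < ⊤) :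
    Tendsto g atTop (nhds 0) := by
  have key : ∀ a b : ℝ, (∫ t in a..b, g' t) = g b - g a := fun a b =>
    integral_eq_sub_of_hasDerivAt (fun t _ => hd t) hint.intervalIntegrable
  have h1 : Tendsto (fun b => ∫ t in (0:ℝ)..b, g' t) atTop
      (nhds (∫ t in Ioi (0:ℝ), g' t)) :=
    intervalIntegral_tendsto_integral_Ioi 0 hint.integrableOn tendsto_id
  have h2 : Tendsto g atTop (nhds (g 0 + ∫ t in Ioi (0:ℝ), g' t)) := by
    refine (tendsto_const_nhds.add h1).congr (fun b => ?_)
    rw [key 0 b]; ring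
  have hLtop := tendsto_zero_atTop_aux q hq g _ h2 hLq
  rwa [hLtop] at h2

lemma oneD (q : ℝ) (hq : 0 < q) (g g' : ℝ → ℝ)
    (hd : ∀ t, HasDerivAt g (g' t) t)
    (hint : Integrable g' volume)
    (hLq : ∫⁻ t, (‖g t‖₊ : ENNReal) ^ q < ⊤) :
    ∫ t, g' t = 0 := by
  have key : ∀ a b : ℝ, (∫ t in a..b, g' t) = g b - g a := fun a b =>
    integral_eq_sub_of_hasDerivAt (fun t _ => hd t) hint.intervalIntegrable
  have htop := tendsto_atTop_zero q hq g g' hd hint hLq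
  -- atBot limit via reflection
  have hdG : ∀ t, HasDerivAt (fun b => g (-b)) (-g' (-t)) t := by
    intro t
    have h := (hd (-t)).comp t (hasDerivAt_neg t)
    simp only [mul_neg, mul_one] at h
    exact h
  have hintG : Integrable (fun b => -g' (-b)) volume := (hint.comp_neg).neg
  have hLqG : ∫⁻ t, (‖g (-t)‖₊ : ENNReal) ^ q < ⊤ := by
    have := (Measure.measurePreserving_neg (volume : Measure ℝ)).lintegral_comp_emb
      (Homeomorph.neg ℝ).measurableEmbedding (fun t => (‖g t‖₊ : ENNReal) ^ q)
    rw [this]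
    exact hLq
  have hbot' := tendsto_atTop_zero q hq (fun b => g (-b)) (fun b => -g' (-b)) hdG hintG hLqG
  have hbot : Tendsto g atBot (nhds 0) := by
    have := hbot'.comp (tendsto_neg_atBot_atTop (G := ℝ))
    exact this.congr (fun b => by simp)
  -- combine
  have hmain : Tendsto (fun b : ℝ => ∫ t in (-b)..b, g' t) atTop (nhds (∫ t, g' t)) :=
    intervalIntegral_tendsto_integral hint tendsto_neg_atTop_atBot tendsto_id
  have hmain' : Tendsto (fun b : ℝ => ∫ t in (-b)..b, g' t) atTop (nhds 0) := by
    have : Tendsto (fun b : ℝ => g b - g (-b)) atTop (nhds (0 - 0)) :=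
      htop.sub (hbot.comp tendsto_neg_atTop_atBot)
    rw [sub_zero] at this
    exact this.congr (fun b => (key (-b) b).symm)
  exact tendsto_nhds_unique hmain hmain'

end Aux

/-- If `u : ℝⁿ → ℝ` is continuously differentiable, belongs to `L^q` for some
`1 ≤ q < ∞`, and its `i`-th partial derivative is integrable, then
`∫ ∂u/∂xᵢ = 0`. -/
theorem integral_partialDeriv_eq_zero_of_memLp
    (n : ℕ) (hn : 1 ≤ n) (q : ℝ) (hq : 1 ≤ q) (i : Fin n)
    (u : EuclideanSpace ℝ (Fin n) → ℝ) (hu : ContDiff ℝ 1 u)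
    (huq : MemLp u (ENNReal.ofReal q) volume)
    (hint : Integrable (fun x => fderiv ℝ u x (EuclideanSpace.single i 1)) volume) :
    ∫ x : EuclideanSpace ℝ (Fin n), fderiv ℝ u x (EuclideanSpace.single i 1) = 0 := by
  open Filter Set intervalIntegral in
  obtain ⟨m, rfl⟩ : ∃ m, n = m + 1 := ⟨n - 1, (Nat.succ_pred_eq_of_pos hn).symm⟩
  have hq0 : 0 < q := lt_of_lt_of_le one_pos hq
  set f : EuclideanSpace ℝ (Fin (m + 1)) → ℝ :=
    fun x => fderiv ℝ u x (EuclideanSpace.single i 1) with hf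
  set Ψ : (ℝ × (Fin m → ℝ)) ≃ᵐ EuclideanSpace ℝ (Fin (m + 1)) :=
    (MeasurableEquiv.piFinSuccAbove (fun _ => ℝ) i).symm.trans
      (MeasurableEquiv.toLp 2 (Fin (m + 1) → ℝ)) with hΨdef
  have hΨ : MeasurePreserving Ψ ((volume : Measure ℝ).prod (volume : Measure (Fin m → ℝ)))
      volume :=
    ((EuclideanSpace.volume_preserving_symm_measurableEquiv_toLp (Fin (m + 1))).symm
        (MeasurableEquiv.toLp 2 (Fin (m + 1) → ℝ)).symm).comp
      ((volume_preserving_piFinSuccAbove (fun _ : Fin (m + 1) => ℝ) i).symm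
        (MeasurableEquiv.piFinSuccAbove (fun _ => ℝ) i))
  have hw : ∀ (t : ℝ) (y : Fin m → ℝ),
      Ψ (t, y) = Ψ (0, y) + t • EuclideanSpace.single i 1 := by
    intro t y
    refine PiLp.ext fun j => ?_
    refine Fin.succAboveCases i ?_ ?_ j
    · simp [hΨdef, MeasurableEquiv.piFinSuccAbove, MeasurableEquiv.coe_toLp, MeasurableEquiv.symm_mk, MeasurableEquiv.coe_mk, Fin.insertNthEquiv,
        PiLp.add_apply, PiLp.smul_apply, EuclideanSpace.single_apply]
    · intro k
      simp [hΨdef, MeasurableEquiv.piFinSuccAbove, MeasurableEquiv.coe_toLp, MeasurableEquiv.symm_mk, MeasurableEquiv.coe_mk, Fin.insertNthEquiv,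
        PiLp.add_apply, PiLp.smul_apply, EuclideanSpace.single_apply,
        (Fin.succAbove_ne i k)]
  have hderiv : ∀ (y : Fin m → ℝ) (t : ℝ),
      HasDerivAt (fun s => u (Ψ (s, y))) (f (Ψ (t, y))) t := by
    intro y t
    have hline : HasDerivAt (fun s : ℝ => Ψ (0, y) + s • EuclideanSpace.single i 1)
        (EuclideanSpace.single i 1) t := by
      simpa using ((hasDerivAt_id t).smul_const (EuclideanSpace.single i 1)).const_add (Ψ (0, y))
    have := ((hu.differentiable one_ne_zero).differentiableAt.hasFDerivAt).comp_hasDerivAt t hline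
    rw [← hw t y] at this
    simp only [Function.comp_def] at this
    rw [show (fun s : ℝ => u (Ψ (0, y) + s • EuclideanSpace.single i 1))
        = fun s => u (Ψ (s, y)) from funext fun s => by rw [← hw s y]] at this
    exact this
  -- transfer integrability
  have hfint : Integrable (fun p : ℝ × (Fin m → ℝ) => f (Ψ p))
      ((volume : Measure ℝ).prod (volume : Measure (Fin m → ℝ))) :=
    (hΨ.integrable_comp_emb Ψ.measurableEmbedding).mpr hint
  -- transfer the Lq bound
  have hulint : ∫⁻ p : ℝ × (Fin m → ℝ), (‖u (Ψ p)‖₊ : ENNReal) ^ q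
      ∂((volume : Measure ℝ).prod (volume : Measure (Fin m → ℝ))) < ⊤ := by
    have h0 : (ENNReal.ofReal q) ≠ 0 := by
      simp [ENNReal.ofReal_eq_zero, not_le, hq0]
    have htp : (ENNReal.ofReal q) ≠ ⊤ := ENNReal.ofReal_ne_top
    have := (eLpNorm_lt_top_iff_lintegral_rpow_enorm_lt_top h0 htp).mp huq.2
    rw [ENNReal.toReal_ofReal hq0.le] at this
    exact lt_of_eq_of_lt (hΨ.lintegral_comp_emb Ψ.measurableEmbedding
      (fun x => (‖u x‖₊ : ENNReal) ^ q)) this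
  -- a.e. slice facts
  have hmeas : Measurable (fun p : ℝ × (Fin m → ℝ) => (‖u (Ψ p)‖₊ : ENNReal) ^ q) := by
    have : Continuous u := hu.continuous
    exact ((this.measurable.comp Ψ.measurable).nnnorm.coe_nnreal_ennreal).pow_const q
  have hslq : ∀ᵐ y : Fin m → ℝ,
      ∫⁻ t : ℝ, (‖u (Ψ (t, y))‖₊ : ENNReal) ^ q < ⊤ := by
    have hswap := lintegral_prod_symm (μ := (volume : Measure ℝ)) (ν := (volume : Measure (Fin m → ℝ))) _ hmeas.aemeasurable
    rw [hswap] at hulint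
    exact ae_lt_top hmeas.lintegral_prod_left' hulint.ne
  have hslint := hfint.prod_left_ae
  have hslice : ∀ᵐ y : Fin m → ℝ, (∫ t : ℝ, f (Ψ (t, y))) = 0 := by
    filter_upwards [hslq, hslint] with y h1 h2
    exact oneD q hq0 (fun t => u (Ψ (t, y))) (fun t => f (Ψ (t, y)))
      (hderiv y) h2 h1
  -- Fubini
  calc ∫ x : EuclideanSpace ℝ (Fin (m + 1)), f x
      = ∫ p : ℝ × (Fin m → ℝ), f (Ψ p)
        ∂((volume : Measure ℝ).prod (volume : Measure (Fin m → ℝ))) :=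
        (hΨ.integral_comp Ψ.measurableEmbedding f).symm
    _ = ∫ y : Fin m → ℝ, ∫ t : ℝ, f (Ψ (t, y)) := integral_prod_symm _ hfint
    _ = 0 := by rw [integral_congr_ae hslice, MeasureTheory.integral_zero]
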